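/- arXiv:1307.3533 — 6 statements merged into one kernel-verified Lean document; each statement's English description precedes it below -/
import Mathlib

section
/- Let E be an irredundant subset of a boolean algebra B and let d be an element of B not in the subalgebra generated by E such that the only element of the subalgebra generated by E below d is 0. Then E ∪ {d} is irredundant. -/
open Cardinal Set

universe u
variable {B : Type u} [BooleanAlgebra B]

/-- Membership in the boolean subalgebra of `B` generated by `E`. -/
inductive InGen (E : Set B) : B → Prop
  | base {a : B} : a ∈ E → InGen E a
  | bot : InGen E ⊥
  | compl {a : B} : InGen E a → InGen E aᶜ
  | sup {a b : B} : InGen E a → InGen E b → InGen E (a ⊔ b)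

/-- `E` is irredundant. -/
def Irred (E : Set B) : Prop := ∀ a ∈ E, ¬ InGen (E \ {a}) a

/-- `E` is independent. -/
def Indep (E : Set B) : Prop :=
  ∀ F G : Finset B, ↑F ⊆ E → ↑G ⊆ E → Disjoint F G →
    F.inf id ⊓ G.inf (fun a => aᶜ) ≠ ⊥

/-- `S` is dense in `B`. -/
def DenseSub (S : Set B) : Prop := ∀ b : B, b ≠ ⊥ → ∃ d ∈ S, d ≠ ⊥ ∧ d ≤ b

/-- pi-weight of `B`: least size of a dense subset. -/
noncomputable def piWeight (B : Type u) [BooleanAlgebra B] : Cardinal :=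
  sInf {c | ∃ S : Set B, DenseSub S ∧ #S = c}

/-- `E` is a maximal irredundant subset of `B`. -/
def MaxIrred (E : Set B) : Prop :=
  Irred E ∧ ∀ b : B, b ∉ E → ¬ Irred (insert b E)

/-- least size of a maximal irredundant subset of `B`. -/
noncomputable def irrMM (B : Type u) [BooleanAlgebra B] : Cardinal :=
  sInf {c | ∃ E : Set B, MaxIrred E ∧ #E = c}


lemma InGen.mono {S T : Set B} (h : S ⊆ T) {a : B} (ha : InGen S a) : InGen T a := by
  induction ha with
  | base hm => exact .base (h hm)
  | bot => exact .bot
  | compl _ ih => exact ih.compl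
  | sup _ _ ih1 ih2 => exact ih1.sup ih2

lemma InGen.inf {S : Set B} {a b : B} (ha : InGen S a) (hb : InGen S b) :
    InGen S (a ⊓ b) := by
  have := (ha.compl.sup hb.compl).compl
  simpa [compl_sup] using this

lemma compl_inf_aux {a x d : B} (h : a ⊓ d = x ⊓ d) : aᶜ ⊓ d = xᶜ ⊓ d := by
  have key : ∀ b : B, bᶜ ⊓ d = (b ⊓ d)ᶜ ⊓ d := by
    intro b; simp [compl_inf, inf_sup_right]
  rw [key a, key x, h]

lemma gen_insert {S : Set B} {d a : B} (h : InGen (insert d S) a) :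
    ∃ x y, InGen S x ∧ InGen S y ∧ a ⊓ d = x ⊓ d ∧ a ⊓ dᶜ = y ⊓ dᶜ := by
  induction h with
  | @base b hm =>
    rcases hm with rfl | hm
    · exact ⟨⊥ᶜ, ⊥, InGen.bot.compl, InGen.bot, by simp, by simp⟩
    · exact ⟨b, b, .base hm, .base hm, rfl, rfl⟩
  | bot => exact ⟨⊥, ⊥, .bot, .bot, by simp, by simp⟩
  | compl _ ih =>
    obtain ⟨x, y, hx, hy, h1, h2⟩ := ih
    exact ⟨xᶜ, yᶜ, hx.compl, hy.compl, compl_inf_aux h1, compl_inf_aux h2⟩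
  | sup _ _ ih1 ih2 =>
    obtain ⟨x, y, hx, hy, h1, h2⟩ := ih1
    obtain ⟨x', y', hx', hy', h1', h2'⟩ := ih2
    exact ⟨x ⊔ x', y ⊔ y', hx.sup hx', hy.sup hy',
      by rw [inf_sup_right, h1, h1', ← inf_sup_right],
      by rw [inf_sup_right, h2, h2', ← inf_sup_right]⟩

theorem irred_insert_of_min {B : Type u} [BooleanAlgebra B] (E : Set B) (d : B)
    (hirr : Irred E) (hd : ¬ InGen E d)
    (hmin : ∀ a : B, InGen E a → a ≤ d → a = ⊥) :
    Irred (insert d E) := by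
  intro a ha hgen
  by_cases had : a = d
  · subst had
    exact hd (hgen.mono (by intro x hx; exact (Set.mem_insert_iff.mp hx.1).resolve_left hx.2))
  · have haE : a ∈ E := ha.resolve_left had
    have hset : insert d E \ {a} = insert d (E \ {a}) := by
      ext x
      simp only [Set.mem_diff, Set.mem_insert_iff, Set.mem_singleton_iff]
      constructor
      · rintro ⟨h1 | h1, h2⟩
        · exact Or.inl h1
        · exact Or.inr ⟨h1, h2⟩
      · rintro (rfl | ⟨h1, h2⟩)
        · exact ⟨Or.inl rfl, fun h => had h.symm⟩
        · exact ⟨Or.inr h1, h2⟩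
    rw [hset] at hgen
    obtain ⟨x, y, hx, hy, h1, h2⟩ := gen_insert hgen
    have hyE : InGen E y := hy.mono (Set.diff_subset)
    have haG : InGen E a := .base haE
    -- a Δ y ∈ gen E
    have hsd : InGen E (symmDiff a y) := by
      rw [symmDiff_eq_sup_sdiff_inf, _root_.sdiff_eq]
      exact (haG.sup hyE).inf (haG.inf hyE).compl
    have hle : symmDiff a y ≤ d := by
      have hdisj : (symmDiff a y) ⊓ dᶜ = ⊥ := by
        simp only [symmDiff_def, _root_.sdiff_eq]
        have e1 : a ⊓ yᶜ ⊓ dᶜ = ⊥ := by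
          rw [inf_right_comm, h2]
          rw [inf_right_comm, inf_compl_self]; simp
        have e2 : y ⊓ aᶜ ⊓ dᶜ = ⊥ := by
          rw [inf_right_comm, ← h2]
          rw [inf_right_comm, inf_compl_self]; simp
        rw [inf_sup_right, e1, e2]; simp
      have : symmDiff a y = (symmDiff a y) ⊓ d := by
        conv_lhs => rw [← inf_top_eq (symmDiff a y), ← sup_compl_eq_top (x := d), inf_sup_left, hdisj]
        simp
      rw [this]; exact inf_le_right
    have := hmin _ hsd hle
    have hay : a = y := by
      have := symmDiff_eq_bot.mp this
      exact this
    exact hirr a haE (hay ▸ hy)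
end

section
/- If E is a chain in a boolean algebra B with |E| ≥ 2 and 0,1 ∉ E, then E is irredundant but not independent. -/
open Cardinal Set

universe u
variable {B : Type u} [BooleanAlgebra B]

theorem chain_irred_not_indep {B : Type u} [BooleanAlgebra B] (E : Set B)
    (hc : IsChain (· ≤ ·) E) (h2 : E.Nontrivial) (h0 : ⊥ ∉ E) (h1 : ⊤ ∉ E) :
    Irred E ∧ ¬ Indep E := by
  constructor
  · intro a ha hgen
    have hane : a ≠ ⊥ := fun h => h0 (h ▸ ha)
    have hant : a ≠ ⊤ := fun h => h1 (h ▸ ha)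
    have hcompL : ∀ p q : B, (p = ⊥ ∨ p ∈ E ∧ p < a) → (q = ⊥ ∨ q ∈ E ∧ q < a) →
        p ≤ q ∨ q ≤ p := by
      intro p q hp hq
      rcases hp with rfl | hp
      · exact Or.inl bot_le
      rcases hq with rfl | hq
      · exact Or.inr bot_le
      by_cases h : p = q
      · exact Or.inl h.le
      · exact hc hp.1 hq.1 h
    have hcompU : ∀ p q : B, (p = ⊤ ∨ p ∈ E ∧ a < p) → (q = ⊤ ∨ q ∈ E ∧ a < q) →
        p ≤ q ∨ q ≤ p := by
      intro p q hp hq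
      rcases hp with rfl | hp
      · exact Or.inr le_top
      rcases hq with rfl | hq
      · exact Or.inl le_top
      by_cases h : p = q
      · exact Or.inl h.le
      · exact hc hp.1 hq.1 h
    have key : ∀ x, InGen (E \ {a}) x →
        ∃ l u : B, (l = ⊥ ∨ l ∈ E ∧ l < a) ∧ (u = ⊤ ∨ u ∈ E ∧ a < u) ∧
          (x ⊓ u ≤ l ∨ u ≤ x ⊔ l) := by
      intro x hx
      induction hx with
      | @base c hcmem =>
        obtain ⟨hcE, hcne⟩ := hcmem
        simp only [Set.mem_singleton_iff] at hcne
        rcases hc hcE ha hcne with hle | hle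
        · exact ⟨c, ⊤, Or.inr ⟨hcE, lt_of_le_of_ne hle hcne⟩, Or.inl rfl,
            Or.inl (by simp)⟩
        · exact ⟨⊥, c, Or.inl rfl, Or.inr ⟨hcE, lt_of_le_of_ne hle (Ne.symm hcne)⟩,
            Or.inr (by simp)⟩
      | bot => exact ⟨⊥, ⊤, Or.inl rfl, Or.inl rfl, Or.inl (by simp)⟩
      | @compl x hx ih =>
        obtain ⟨l, u, hl, hu, hor⟩ := ih
        refine ⟨l, u, hl, hu, ?_⟩
        rcases hor with h | h
        · refine Or.inr ?_
          calc u = (u ⊓ x) ⊔ (u ⊓ xᶜ) := by rw [← inf_sup_left]; simp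
            _ ≤ l ⊔ xᶜ := sup_le_sup (by rw [inf_comm]; exact h) inf_le_right
            _ = xᶜ ⊔ l := sup_comm _ _
        · refine Or.inl ?_
          calc xᶜ ⊓ u ≤ xᶜ ⊓ (x ⊔ l) := inf_le_inf_left _ h
            _ = (xᶜ ⊓ x) ⊔ (xᶜ ⊓ l) := inf_sup_left _ _ _
            _ ≤ l := by simp
      | @sup x y hx hy ihx ihy =>
        obtain ⟨l₁, u₁, hl₁, hu₁, h₁⟩ := ihx
        obtain ⟨l₂, u₂, hl₂, hu₂, h₂⟩ := ihy
        obtain ⟨l, hl, hl₁le, hl₂le⟩ : ∃ l : B, (l = ⊥ ∨ l ∈ E ∧ l < a) ∧ l₁ ≤ l ∧ l₂ ≤ l := by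
          rcases hcompL l₁ l₂ hl₁ hl₂ with h | h
          · exact ⟨l₂, hl₂, h, le_refl _⟩
          · exact ⟨l₁, hl₁, le_refl _, h⟩
        obtain ⟨u, hu, hu₁le, hu₂le⟩ : ∃ u : B, (u = ⊤ ∨ u ∈ E ∧ a < u) ∧ u ≤ u₁ ∧ u ≤ u₂ := by
          rcases hcompU u₁ u₂ hu₁ hu₂ with h | h
          · exact ⟨u₁, hu₁, le_refl _, h⟩
          · exact ⟨u₂, hu₂, h, le_refl _⟩
        refine ⟨l, u, hl, hu, ?_⟩
        rcases h₁ with h₁ | h₁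
        · rcases h₂ with h₂ | h₂
          · refine Or.inl ?_
            calc (x ⊔ y) ⊓ u = (x ⊓ u) ⊔ (y ⊓ u) := inf_sup_right _ _ _
              _ ≤ (x ⊓ u₁) ⊔ (y ⊓ u₂) :=
                sup_le_sup (inf_le_inf_left _ hu₁le) (inf_le_inf_left _ hu₂le)
              _ ≤ l ⊔ l := sup_le_sup (h₁.trans hl₁le) (h₂.trans hl₂le)
              _ = l := sup_idem _
          · exact Or.inr (hu₂le.trans (h₂.trans (sup_le_sup le_sup_right hl₂le)))
        · exact Or.inr (hu₁le.trans (h₁.trans (sup_le_sup le_sup_left hl₁le)))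
    obtain ⟨l, u, hl, hu, hor⟩ := key a hgen
    have hla : l < a := by
      rcases hl with rfl | hl
      · exact bot_lt_iff_ne_bot.mpr hane
      · exact hl.2
    have hau : a < u := by
      rcases hu with rfl | hu
      · exact lt_top_iff_ne_top.mpr hant
      · exact hu.2
    rcases hor with h | h
    · exact hla.not_ge (by simpa [inf_eq_left.mpr hau.le] using h)
    · exact hau.not_ge (by simpa [sup_eq_left.mpr hla.le] using h)
  · intro hI
    obtain ⟨x, hx, y, hy, hne⟩ := h2
    obtain ⟨p, q, hp, hq, hpq, hle⟩ : ∃ p q : B, p ∈ E ∧ q ∈ E ∧ p ≠ q ∧ p ≤ q := by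
      rcases hc hx hy hne with h | h
      · exact ⟨x, y, hx, hy, hne, h⟩
      · exact ⟨y, x, hy, hx, Ne.symm hne, h⟩
    have hdisj : Disjoint ({p} : Finset B) {q} := by
      simp [Finset.disjoint_singleton, hpq.symm, hpq]
    apply hI {p} {q} (by simpa using hp) (by simpa using hq) hdisj
    simp only [Finset.inf_singleton, id]
    rw [← _root_.sdiff_eq, sdiff_eq_bot_iff]
    exact hle
end

section
/- For any infinite cardinal κ, Irr_mm(P(κ)) = κ and π(P(κ)) = κ. -/
open Cardinal Set

universe u
variable {B : Type u} [BooleanAlgebra B]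

/-! ### Auxiliary lemmas -/

open scoped symmDiff

lemma inGen_mono {D D' : Set B} (h : D ⊆ D') {g : B} (hg : InGen D g) : InGen D' g := by
  induction hg with
  | base ha => exact .base (h ha)
  | bot => exact .bot
  | compl _ ih => exact .compl ih
  | sup _ _ ih1 ih2 => exact .sup ih1 ih2

/-- Stages of generation. -/
def genSeq (E : Set B) : ℕ → Set B
  | 0 => insert ⊥ E
  | n+1 => genSeq E n ∪ compl '' genSeq E n ∪ ⋃ a ∈ genSeq E n, (a ⊔ ·) '' genSeq E n

lemma genSeq_mono (E : Set B) : Monotone (genSeq E) := by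
  apply monotone_nat_of_le_succ
  intro n
  exact (Set.subset_union_left (t := compl '' genSeq E n)).trans Set.subset_union_left

lemma inGen_mem_genSeq {E : Set B} {g : B} (hg : InGen E g) : ∃ n, g ∈ genSeq E n := by
  induction hg with
  | base ha => exact ⟨0, Set.mem_insert_of_mem _ ha⟩
  | bot => exact ⟨0, Set.mem_insert _ _⟩
  | compl _ ih =>
      obtain ⟨n, hn⟩ := ih
      exact ⟨n + 1, Or.inl (Or.inr ⟨_, hn, rfl⟩)⟩
  | sup _ _ ih1 ih2 =>
      obtain ⟨n, hn⟩ := ih1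
      obtain ⟨m, hm⟩ := ih2
      refine ⟨max n m + 1, Or.inr ?_⟩
      exact Set.mem_biUnion (genSeq_mono E (le_max_left n m) hn)
        ⟨_, genSeq_mono E (le_max_right n m) hm, rfl⟩

lemma mk_genSeq_le {E : Set B} (hE : ℵ₀ ≤ #E) (n : ℕ) : #(genSeq E n) ≤ #E := by
  induction n with
  | zero =>
      calc #(insert (⊥ : B) E : Set B) ≤ #E + 1 := Cardinal.mk_insert_le
        _ ≤ #E + #E := by
            gcongr
            exact (Cardinal.one_le_aleph0).trans hE
        _ = #E := Cardinal.add_eq_self hE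
  | succ n ih =>
      have hne : Nonempty ↥(genSeq E n) :=
        ⟨⟨⊥, genSeq_mono E (Nat.zero_le n) (Set.mem_insert _ _)⟩⟩
      have h1 : #(compl '' genSeq E n : Set B) ≤ #E := Cardinal.mk_image_le.trans ih
      have h2 : #(⋃ a ∈ genSeq E n, (a ⊔ ·) '' genSeq E n : Set B) ≤ #E := by
        refine (Cardinal.mk_biUnion_le _ _).trans ?_
        calc #(genSeq E n) * ⨆ a : ↥(genSeq E n), #(((a : B) ⊔ ·) '' genSeq E n : Set B)
            ≤ #E * #E := mul_le_mul' ih (ciSup_le fun a => Cardinal.mk_image_le.trans ih)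
          _ = #E := Cardinal.mul_eq_self hE
      calc #(genSeq E (n + 1)) ≤ #(genSeq E n ∪ compl '' genSeq E n : Set B)
            + #(⋃ a ∈ genSeq E n, (a ⊔ ·) '' genSeq E n : Set B) := Cardinal.mk_union_le _ _
        _ ≤ (#(genSeq E n) + #(compl '' genSeq E n : Set B)) + #E :=
            add_le_add (Cardinal.mk_union_le _ _) h2
        _ ≤ (#E + #E) + #E := by gcongr
        _ = #E := by rw [Cardinal.add_eq_self hE, Cardinal.add_eq_self hE]

lemma mk_inGen_le (E : Set B) (hE : ℵ₀ ≤ #E) : #{g : B | InGen E g} ≤ #E := by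
  have hsub : {g : B | InGen E g} ⊆ ⋃ n, genSeq E n := fun g hg =>
    Set.mem_iUnion.2 (inGen_mem_genSeq hg)
  have huni : (⋃ n, genSeq E n) = ⋃ n : ULift.{u} ℕ, genSeq E n.down := by
    ext g
    simp only [Set.mem_iUnion]
    exact ⟨fun ⟨n, h⟩ => ⟨⟨n⟩, h⟩, fun ⟨n, h⟩ => ⟨n.down, h⟩⟩
  rw [huni] at hsub
  refine (Cardinal.mk_le_mk_of_subset hsub).trans ?_
  refine (Cardinal.mk_iUnion_le _).trans ?_
  have hmkn : #(ULift.{u} ℕ) = ℵ₀ := by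
    rw [Cardinal.mk_uLift, Cardinal.mk_nat, Cardinal.lift_aleph0]
  calc #(ULift.{u} ℕ) * ⨆ n : ULift.{u} ℕ, #(genSeq E n.down) ≤ ℵ₀ * #E := by
        rw [hmkn]
        exact mul_le_mul' le_rfl (ciSup_le fun n => mk_genSeq_le hE n.down)
    _ = #E := by rw [Cardinal.mul_eq_max (le_refl ℵ₀) hE]; exact max_eq_right hE

section PowerSet

variable {X : Type u}

lemma inGen_saturated {E : Set (Set X)} {g : Set X} (hg : InGen E g)
    {p q : X} (hpq : ∀ e ∈ E, p ∈ e ↔ q ∈ e) : p ∈ g ↔ q ∈ g := by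
  induction hg with
  | base ha => exact hpq _ ha
  | bot => simp
  | compl _ ih => simp [Set.mem_compl_iff, ih]
  | sup _ _ ih1 ih2 =>
      show p ∈ _ ∪ _ ↔ q ∈ _ ∪ _
      simp [Set.mem_union, ih1, ih2]

lemma inGen_insert_singleton {x : X} {D : Set (Set X)} {g : Set X}
    (hg : InGen (insert ({x} : Set X) D) g) :
    ∃ u : Set X, InGen D u ∧ ∀ y, y ≠ x → (y ∈ g ↔ y ∈ u) := by
  induction hg with
  | base ha =>
      rcases Set.mem_insert_iff.1 ha with rfl | ha
      · exact ⟨⊥, .bot, fun y hy => by simp [hy]⟩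
      · exact ⟨_, .base ha, fun y _ => Iff.rfl⟩
  | bot => exact ⟨⊥, .bot, fun _ _ => Iff.rfl⟩
  | compl _ ih =>
      obtain ⟨u, hu, hag⟩ := ih
      exact ⟨uᶜ, .compl hu, fun y hy => by simp [Set.mem_compl_iff, hag y hy]⟩
  | sup _ _ ih1 ih2 =>
      obtain ⟨u1, hu1, ha1⟩ := ih1
      obtain ⟨u2, hu2, ha2⟩ := ih2
      refine ⟨u1 ⊔ u2, .sup hu1 hu2, fun y hy => ?_⟩
      show y ∈ _ ∪ _ ↔ y ∈ _ ∪ _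
      simp [Set.mem_union, ha1 y hy, ha2 y hy]

lemma eq_or_eq_symmDiff {s t : Set X} {x : X}
    (h : ∀ y, y ≠ x → (y ∈ s ↔ y ∈ t)) : s = t ∨ s = t ∆ {x} := by
  by_cases hx : (x ∈ s ↔ x ∈ t)
  · left
    ext y
    by_cases hy : y = x
    · subst hy; exact hx
    · exact h y hy
  · right
    ext y
    by_cases hy : y = x
    · subst hy
      simp only [Set.mem_symmDiff, Set.mem_singleton_iff]
      tauto
    · simp only [Set.mem_symmDiff, Set.mem_singleton_iff, hy]
      rw [h y hy]
      tauto

/-- If a point admits no "redundancy witnesses", then `E` is not maximal irredundant. -/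
lemma no_good_point {E : Set (Set X)} (hE : MaxIrred E) (x : X)
    (h1 : ¬ InGen E {x}) (h2 : ∀ a ∈ E, ¬ InGen (E \ {a}) (a ∆ ({x} : Set X))) : False := by
  have hxE : ({x} : Set X) ∉ E := fun h => h1 (.base h)
  refine hE.2 {x} hxE ?_
  intro a ha hg
  rcases Set.mem_insert_iff.1 ha with rfl | haE
  · refine h1 (inGen_mono ?_ hg)
    intro s hs
    rcases Set.mem_insert_iff.1 hs.1 with rfl | hsE
    · exact absurd rfl hs.2
    · exact hsE
  · have hax : a ≠ ({x} : Set X) := fun h => hxE (h ▸ haE)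
    have hset : (insert ({x} : Set X) E) \ {a} = insert ({x} : Set X) (E \ {a}) := by
      ext s
      simp only [Set.mem_diff, Set.mem_insert_iff, Set.mem_singleton_iff]
      constructor
      · rintro ⟨rfl | hsE, hsa⟩
        · exact Or.inl rfl
        · exact Or.inr ⟨hsE, hsa⟩
      · rintro (rfl | ⟨hsE, hsa⟩)
        · exact ⟨Or.inl rfl, fun h => hax h.symm⟩
        · exact ⟨Or.inr hsE, hsa⟩
    rw [hset] at hg
    obtain ⟨u, hu, hagree⟩ := inGen_insert_singleton hg
    rcases eq_or_eq_symmDiff hagree with h | h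
    · exact hE.1 a haE (h ▸ hu)
    · refine h2 a haE ?_
      have hcancel : a ∆ ({x} : Set X) = u := by
        rw [h, symmDiff_symmDiff_cancel_right]
      rw [hcancel]
      exact hu

/-- Every maximal irredundant subset of a power set algebra has full cardinality. -/
lemma maxIrred_card_ge {κ : Cardinal.{u}} (hκ : ℵ₀ ≤ κ) (hX : #X = κ)
    {E : Set (Set X)} (hE : MaxIrred E) : κ ≤ #E := by
  by_contra hlt
  push_neg at hlt
  rcases lt_or_ge (#E) ℵ₀ with hfin | hinf
  · -- finite case : pigeonhole
    haveI : Infinite X := by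
      rw [Cardinal.infinite_iff, hX]; exact hκ
    haveI : Finite ↥E := Cardinal.lt_aleph0_iff_finite.1 hfin
    obtain ⟨p, q, hpq, hfeq⟩ :=
      Finite.exists_ne_map_eq_of_infinite (fun (z : X) (e : ↥E) => z ∈ (e : Set X))
    have hpat : ∀ e ∈ E, p ∈ e ↔ q ∈ e := fun e he =>
      iff_of_eq (congrFun hfeq ⟨e, he⟩)
    refine no_good_point hE p ?_ ?_
    · intro h
      have := inGen_saturated h hpat
      simp only [Set.mem_singleton_iff] at this
      exact hpq (this.1 trivial).symm
    · intro a ha hgen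
      have hpat' : ∀ e ∈ E \ {a}, p ∈ e ↔ q ∈ e := fun e he => hpat e he.1
      have hiff := inGen_saturated hgen hpat'
      have hpa : p ∈ a ↔ q ∈ a := hpat a ha
      simp only [Set.mem_symmDiff, Set.mem_singleton_iff] at hiff
      by_cases h : p ∈ a <;> [skip; skip] <;> tauto
  · -- infinite case : counting
    set A : Set (Set X) := {g | InGen E g} with hA
    have hAcard : #A ≤ #E := mk_inGen_le E hinf
    set Bad1 : Set X := {z | InGen E {z}} with hB1
    set Bad2 : Set X := {z | ∃ a ∈ E, InGen (E \ {a}) (a ∆ ({z} : Set X))} with hB2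
    have hb1 : #Bad1 ≤ #A := by
      refine Cardinal.mk_le_of_injective (f := fun z : ↥Bad1 => (⟨{z.1}, z.2⟩ : ↥A)) ?_
      intro z w h
      have := congrArg Subtype.val h
      exact Subtype.ext (Set.singleton_injective this)
    have hb2 : #Bad2 ≤ #E * #A := by
      have hinj : Function.Injective (fun z : ↥Bad2 =>
          ((⟨z.2.choose, z.2.choose_spec.1⟩ : ↥E),
            (⟨z.2.choose ∆ ({z.1} : Set X),
              inGen_mono Set.diff_subset z.2.choose_spec.2⟩ : ↥A))) := by
        intro z w h
        have h1 : z.2.choose = w.2.choose := congrArg (Subtype.val ∘ Prod.fst) h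
        have h2 : z.2.choose ∆ ({z.1} : Set X) = w.2.choose ∆ ({w.1} : Set X) :=
          congrArg (Subtype.val ∘ Prod.snd) h
        rw [h1] at h2
        have := symmDiff_right_injective _ h2
        exact Subtype.ext (Set.singleton_injective this)
      refine (Cardinal.mk_le_of_injective hinj).trans ?_
      rw [Cardinal.mk_prod, Cardinal.lift_id, Cardinal.lift_id]
    have hbad : #(Bad1 ∪ Bad2 : Set X) < κ := by
      have h1 : #E < κ := hlt
      calc #(Bad1 ∪ Bad2 : Set X) ≤ #Bad1 + #Bad2 := Cardinal.mk_union_le _ _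
        _ ≤ #E + #E * #E := add_le_add (hb1.trans hAcard)
            (hb2.trans (mul_le_mul' le_rfl hAcard))
        _ < κ := Cardinal.add_lt_of_lt hκ h1 (Cardinal.mul_lt_of_lt hκ h1 h1)
    have hne : (Bad1 ∪ Bad2 : Set X) ≠ Set.univ := by
      intro h
      rw [h, Cardinal.mk_univ, hX] at hbad
      exact lt_irrefl _ hbad
    obtain ⟨x, hx⟩ := Set.ne_univ_iff_exists_notMem _ |>.1 hne
    refine no_good_point hE x ?_ ?_
    · exact fun h => hx (Or.inl h)
    · exact fun a ha hg => hx (Or.inr ⟨a, ha, hg⟩)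

end PowerSet

section Construction

variable {X : Type u} [LinearOrder X] [WellFoundedLT X]

/-- The family of nonempty proper initial segments. -/
def segFam (X : Type u) [LinearOrder X] : Set (Set X) :=
  {s | ∃ x : X, s = Set.Iio x ∧ (Set.Iio x).Nonempty}

lemma irred_segFam : Irred (segFam X) := by
  rintro a ⟨β, rfl, p₀, hp₀⟩ hgen
  have key : ∀ g : Set X, InGen (segFam X \ {Set.Iio β}) g →
      ∃ p, p < β ∧ ∀ q, p ≤ q → q ≤ β → (q ∈ g ↔ β ∈ g) := by
    intro g hg
    induction hg with
    | base he =>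
        obtain ⟨⟨δ, rfl, hδ⟩, hne⟩ := he
        have hδβ : δ ≠ β := by
          intro h
          exact hne (by rw [h]; rfl)
        rcases lt_or_gt_of_ne hδβ with h | h
        · refine ⟨δ, h, fun q hq1 _ => ?_⟩
          exact iff_of_false (not_lt.2 hq1) (not_lt.2 h.le)
        · exact ⟨p₀, hp₀, fun q _ hq2 => iff_of_true (lt_of_le_of_lt hq2 h) h⟩
    | bot => exact ⟨p₀, hp₀, fun _ _ _ => Iff.rfl⟩
    | compl _ ih =>
        obtain ⟨p, hp, h⟩ := ih
        exact ⟨p, hp, fun q h1 h2 => by simp [Set.mem_compl_iff, h q h1 h2]⟩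
    | sup _ _ ih1 ih2 =>
        obtain ⟨p1, hp1, hh1⟩ := ih1
        obtain ⟨p2, hp2, hh2⟩ := ih2
        refine ⟨max p1 p2, max_lt hp1 hp2, fun q hq1 hq2 => ?_⟩
        show q ∈ _ ∪ _ ↔ β ∈ _ ∪ _
        rw [Set.mem_union, Set.mem_union, hh1 q ((le_max_left _ _).trans hq1) hq2,
          hh2 q ((le_max_right _ _).trans hq1) hq2]
  obtain ⟨p, hp, h⟩ := key _ hgen
  have := h p le_rfl hp.le
  simp only [Set.mem_Iio] at this
  exact lt_irrefl β (this.1 hp)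

lemma maxIrred_segFam [NoMaxOrder X] [Nonempty X] : MaxIrred (segFam X) := by
  refine ⟨irred_segFam, ?_⟩
  intro b hbE hIrr
  by_cases hb0 : b = ⊥
  · subst hb0
    exact hIrr ⊥ (Set.mem_insert _ _) InGen.bot
  by_cases hbu : b = ⊤
  · subst hbu
    refine hIrr ⊤ (Set.mem_insert _ _) ?_
    have : InGen ((insert (⊤ : Set X) (segFam X)) \ {⊤}) (⊥ : Set X)ᶜ :=
      InGen.compl InGen.bot
    rwa [compl_bot] at this
  -- the global minimum
  obtain ⟨z0, _, hz0min⟩ := (IsWellFounded.wf (r := ((· < ·) : X → X → Prop))).has_min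
    Set.univ (Set.univ_nonempty)
  have hz0 : ∀ y : X, ¬ y < z0 := fun y => hz0min y (Set.mem_univ y)
  -- choose c = b or bᶜ not containing z0
  obtain ⟨c, hcb, h0c, hcne⟩ : ∃ c : Set X, (c = b ∨ c = bᶜ) ∧ z0 ∉ c ∧ c.Nonempty := by
    by_cases h : z0 ∈ b
    · refine ⟨bᶜ, Or.inr rfl, fun hc => hc h, ?_⟩
      refine Set.nonempty_compl.2 ?_
      intro h'
      exact hbu (by rw [h', Set.top_eq_univ])
    · refine ⟨b, Or.inl rfl, h, ?_⟩
      rw [Set.nonempty_iff_ne_empty]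
      exact fun h' => hb0 h'
  obtain ⟨β, hβc, hβmin⟩ := (IsWellFounded.wf (r := ((· < ·) : X → X → Prop))).has_min c hcne
  obtain ⟨σ', hσ'⟩ := exists_gt β
  obtain ⟨σ, hσmem, hσmin⟩ := (IsWellFounded.wf (r := ((· < ·) : X → X → Prop))).has_min
    {y | β < y} ⟨σ', hσ'⟩
  have hβσ : β < σ := hσmem
  have hz0β : z0 < β := by
    have hne : z0 ≠ β := fun h => h0c (h ▸ hβc)
    exact lt_of_le_of_ne (not_lt.1 (hz0 β)) hne
  have haE : Set.Iio β ∈ segFam X := ⟨β, rfl, ⟨z0, hz0β⟩⟩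
  have hane : b ≠ Set.Iio β := fun h => hbE (h ▸ haE)
  have key : Set.Iio β = ((Set.Iio σ)ᶜ ⊔ c)ᶜ := by
    ext y
    show y < β ↔ ¬ (y ∈ (Set.Iio σ)ᶜ ∪ c)
    rw [Set.mem_union, Set.mem_compl_iff, Set.mem_Iio]
    push_neg
    constructor
    · intro hyβ
      exact ⟨hyβ.trans hβσ, fun hyc => hβmin y hyc hyβ⟩
    · rintro ⟨hyσ, hyc⟩
      by_contra hy
      have hβy : β ≤ y := not_lt.1 hy
      have hβy' : β < y := lt_of_le_of_ne hβy (fun h => hyc (h ▸ hβc))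
      exact hσmin y hβy' hyσ
  have hIio : Set.Iio σ ∈ (insert b (segFam X)) \ {Set.Iio β} := by
    refine ⟨Set.mem_insert_of_mem _ ⟨σ, rfl, ⟨β, hβσ⟩⟩, ?_⟩
    intro h
    rw [Set.mem_singleton_iff] at h
    have : β ∈ Set.Iio β := h ▸ (Set.mem_Iio.2 hβσ)
    exact lt_irrefl β this
  have hbmem : b ∈ (insert b (segFam X)) \ {Set.Iio β} := by
    refine ⟨Set.mem_insert _ _, ?_⟩
    rw [Set.mem_singleton_iff]
    exact hane
  have hcgen : InGen ((insert b (segFam X)) \ {Set.Iio β}) c := by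
    rcases hcb with rfl | rfl
    · exact .base hbmem
    · exact .compl (.base hbmem)
  have hfinal := InGen.compl (.sup (.compl (.base hIio)) hcgen)
  rw [← key] at hfinal
  exact hIrr _ (Set.mem_insert_of_mem _ haE) hfinal

lemma mk_segFam {κ : Cardinal.{u}} (hκ : ℵ₀ ≤ κ) (hX : #X = κ) : #(segFam X) = κ := by
  have hrw : segFam X = Set.Iio '' {x : X | (Set.Iio x).Nonempty} := by
    ext s
    simp only [segFam, Set.mem_setOf_eq, Set.mem_image]
    constructor
    · rintro ⟨x, rfl, hx⟩; exact ⟨x, hx, rfl⟩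
    · rintro ⟨x, hx, rfl⟩; exact ⟨x, rfl, hx⟩
  have hcard : #(segFam X) = #{x : X | (Set.Iio x).Nonempty} := by
    rw [hrw]
    exact Cardinal.mk_image_eq Set.Iio_injective
  rw [hcard]
  have hsub : ({x : X | (Set.Iio x).Nonempty}ᶜ : Set X).Subsingleton := by
    intro x hx y hy
    simp only [Set.mem_compl_iff, Set.mem_setOf_eq, Set.not_nonempty_iff_eq_empty] at hx hy
    have hx' : ∀ z, ¬ z < x := fun z hz => by
      have : z ∈ Set.Iio x := hz
      rw [hx] at this
      exact this
    have hy' : ∀ z, ¬ z < y := fun z hz => by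
      have : z ∈ Set.Iio y := hz
      rw [hy] at this
      exact this
    exact le_antisymm (not_lt.1 (hx' y)) (not_lt.1 (hy' x))
  have hle : #({x : X | (Set.Iio x).Nonempty}ᶜ : Set X) ≤ 1 :=
    Cardinal.mk_le_one_iff_set_subsingleton.2 hsub
  refine le_antisymm ((Cardinal.mk_set_le _).trans_eq hX) ?_
  by_contra hlt
  push_neg at hlt
  have := Cardinal.mk_sum_compl {x : X | (Set.Iio x).Nonempty}
  rw [hX] at this
  have hone : (1 : Cardinal) < κ := lt_of_lt_of_le Cardinal.one_lt_aleph0 hκ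
  have : κ < κ := by
    calc κ = #{x : X | (Set.Iio x).Nonempty} + #({x : X | (Set.Iio x).Nonempty}ᶜ : Set X) :=
        this.symm
      _ < κ := Cardinal.add_lt_of_lt hκ hlt (lt_of_le_of_lt hle hone)
  exact lt_irrefl κ this

end Construction

theorem irrMM_and_piWeight_powerset (κ : Cardinal.{u}) (hκ : Cardinal.aleph0 ≤ κ) :
    irrMM (Set κ.ord.ToType) = κ ∧ piWeight (Set κ.ord.ToType) = κ := by
  set X := κ.ord.ToType with hXdef
  have hX : #X = κ := Cardinal.mk_ord_toType κ
  haveI : Nonempty X := by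
    rw [← Cardinal.mk_ne_zero_iff, hX]
    exact (Cardinal.aleph0_pos.trans_le hκ).ne'
  haveI : NoMaxOrder X := Cardinal.noMaxOrder hκ
  have hmax : MaxIrred (segFam X) := maxIrred_segFam
  have hcard : #(segFam X) = κ := mk_segFam hκ hX
  constructor
  · refine le_antisymm (csInf_le' ⟨segFam X, hmax, hcard⟩) ?_
    refine le_csInf ⟨κ, segFam X, hmax, hcard⟩ ?_
    rintro c ⟨E', hE', rfl⟩
    exact maxIrred_card_ge hκ hX hE'
  · have hdense : DenseSub (Set.range (fun x : X => ({x} : Set X))) := by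
      intro b hb
      obtain ⟨x, hx⟩ := Set.nonempty_iff_ne_empty.2 (by rwa [← Set.bot_eq_empty])
      refine ⟨{x}, ⟨x, rfl⟩, ?_, Set.singleton_subset_iff.2 hx⟩
      rw [Set.bot_eq_empty]
      exact Set.singleton_ne_empty x
    have hrange : #(Set.range (fun x : X => ({x} : Set X))) = κ := by
      rw [Cardinal.mk_range_eq _ Set.singleton_injective, hX]
    refine le_antisymm (csInf_le' ⟨_, hdense, hrange⟩) ?_
    refine le_csInf ⟨κ, _, hdense, hrange⟩ ?_
    rintro c ⟨S', hS', rfl⟩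
    have hsub : Set.range (fun x : X => ({x} : Set X)) ⊆ S' := by
      rintro _ ⟨x, rfl⟩
      obtain ⟨d, hd, hdne, hdle⟩ := hS' {x} (by
        rw [Set.bot_eq_empty]; exact Set.singleton_ne_empty x)
      rcases Set.subset_singleton_iff_eq.1 hdle with rfl | rfl
      · exact absurd Set.bot_eq_empty hdne
      · exact hd
    calc κ = #(Set.range (fun x : X => ({x} : Set X))) := hrange.symm
      _ ≤ #S' := Cardinal.mk_le_mk_of_subset hsub
end

section
/- If D and C are club subsets of ω₁ with D \ C countable, then all but countably many D-blocks are unions of C-blocks. -/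
open Cardinal Set

universe u
variable {B : Type u} [BooleanAlgebra B]

/-- A fixed set of size ℵ₁ with its canonical well-order: "ω₁". -/
noncomputable def W : Type := (Cardinal.aleph 1).ord.ToType

noncomputable instance : LinearOrder W := inferInstanceAs (LinearOrder (Cardinal.aleph 1).ord.ToType)

/-- The finite-cofinite algebra on ω₁. -/
def finCofin : Set (Set W) := {b | b.Finite ∨ bᶜ.Finite}

/-- `S` is (the underlying set of) a subalgebra of `P(ω₁)`. -/
def IsSubalg (S : Set (Set W)) : Prop :=
  ∅ ∈ S ∧ (∀ a ∈ S, aᶜ ∈ S) ∧ ∀ a ∈ S, ∀ b ∈ S, a ∪ b ∈ S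

/-- `E` is a maximal irredundant subset of the subalgebra (with carrier) `Bs`. -/
def MaxIrredIn (Bs E : Set (Set W)) : Prop :=
  E ⊆ Bs ∧ Irred E ∧ ∀ b ∈ Bs, b ∉ E → ¬ Irred (insert b E)

/-- `Irr_mm` of a subalgebra of `P(ω₁)` with carrier `Bs`. -/
noncomputable def irrMMIn (Bs : Set (Set W)) : Cardinal :=
  sInf {c | ∃ E, MaxIrredIn Bs E ∧ #E = c}

/-- pi-weight of a subalgebra of `P(ω₁)` with carrier `Bs`. -/
noncomputable def piIn (Bs : Set (Set W)) : Cardinal :=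
  sInf {c | ∃ S, S ⊆ Bs ∧ (∀ b ∈ Bs, b ≠ ∅ → ∃ d ∈ S, d ≠ ∅ ∧ d ⊆ b) ∧ #S = c}

/-- `C` is a closed unbounded subset of ω₁. -/
def IsClubW (C : Set W) : Prop :=
  (∀ α : W, ∃ β ∈ C, α < β) ∧
    ∀ α : W, (C ∩ Set.Iio α).Nonempty → IsLUB (C ∩ Set.Iio α) α → α ∈ C

/-- `α` and `β` lie in the same `C`-block. -/
def SameBlock (C : Set W) (α β : W) : Prop := ∀ γ ∈ C, (γ ≤ α ↔ γ ≤ β)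

/-- `C` is a nice club: all of its blocks are infinite. -/
def NiceClub (C : Set W) : Prop := IsClubW C ∧ ∀ α : W, {β | SameBlock C α β}.Infinite

/-- `b` is a union of `C`-blocks. -/
def BlockUnion (C : Set W) (b : Set W) : Prop :=
  ∀ α β : W, SameBlock C α β → (α ∈ b ↔ β ∈ b)

/-- `b` is blockish for `C`: both `b` and its complement are unions of ℵ₁ many `C`-blocks. -/
def Blockish (C : Set W) (b : Set W) : Prop :=
  BlockUnion C b ∧ ¬ b.Countable ∧ ¬ bᶜ.Countable

/-- eventual domination: `f α ≤ g α` except on a set of size `< ℵ₁`. -/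
def EvDom (f g : W → W) : Prop := {α | ¬ f α ≤ g α}.Countable

/-- the bounding number 𝔟_{ω₁}. -/
noncomputable def bW : Cardinal :=
  sInf {c | ∃ F : Set (W → W), (∀ g, ∃ f ∈ F, ¬ EvDom f g) ∧ #F = c}

/-- the dominating number 𝔡_{ω₁}. -/
noncomputable def dW : Cardinal :=
  sInf {c | ∃ F : Set (W → W), (∀ g, ∃ f ∈ F, EvDom g f) ∧ #F = c}

/-- `T` splits `X`. -/
def Splits (T X : Set W) : Prop := ¬ (X ∩ T).Countable ∧ ¬ (X \ T).Countable

/-- the reaping number 𝔯_{ω₁}. -/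
noncomputable def rW : Cardinal :=
  sInf {c | ∃ R : Set (Set W), (∀ X ∈ R, ¬ X.Countable) ∧
    (∀ T : Set W, ∃ X ∈ R, ¬ Splits T X) ∧ #R = c}

/-- the nice club `C` strongly splits `R`. -/
def StrSplits (C : Set W) (R : Set (Set W)) : Prop :=
  ∀ b : Set W, Blockish C b → ∀ X ∈ R, Splits b X

/-- the strong reaping number r̂_{ω₁}. -/
noncomputable def rHatW : Cardinal :=
  sInf {c | ∃ R : Set (Set W), (∀ X ∈ R, ¬ X.Countable) ∧
    (∀ C : Set W, NiceClub C → ¬ StrSplits C R) ∧ #R = c}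

/-- a subalgebra of `P(ω₁)` is dichotomous iff none of its members is countably infinite. -/
def Dichot (Bs : Set (Set W)) : Prop := ∀ b ∈ Bs, ¬ (b.Countable ∧ b.Infinite)

theorem blocks_almost_refine (D C : Set W) (hD : IsClubW D) (hC : IsClubW C)
    (h : (D \ C).Countable) :
    {α : W | ¬ BlockUnion C {β | SameBlock D α β}}.Countable := by
  -- D \ C is bounded since it is countable and cof(ω₁) = ℵ₁
  haveI hwf : WellFoundedLT W :=
    inferInstanceAs (WellFoundedLT (Cardinal.aleph 1).ord.ToType)
  haveI hwo : IsWellOrder W (· < ·) := @isWellOrder_lt W _ hwf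
  have hbdd : Set.Bounded (· < ·) (D \ C) := by
    by_contra hnb
    rw [not_bounded_iff] at hnb
    have hcof : IsCofinal (D \ C) := fun a => by
      obtain ⟨b, hb, hnb'⟩ := hnb a
      exact ⟨b, hb, not_lt.mp hnb'⟩
    have h1 := Order.cof_le hcof
    have h2 : Order.cof W = Cardinal.aleph 1 := by
      change Order.cof (Cardinal.aleph 1).ord.ToType = _
      rw [Ordinal.cof_toType, Cardinal.isRegular_aleph_one.cof_ord]
    rw [h2] at h1
    exact absurd ((Cardinal.countable_iff_lt_aleph_one _).mp h) (not_lt.mpr h1)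
  obtain ⟨δ, hδ⟩ := hbdd
  obtain ⟨δ', hδ'C, hδδ'⟩ := hC.1 δ
  obtain ⟨ε, hεD, hδ'ε⟩ := hD.1 δ'
  have key : ∀ α : W, ε ≤ α → BlockUnion C {β | SameBlock D α β} := by
    intro α hεα
    have helper : ∀ β β' : W, SameBlock C β β' → SameBlock D α β → SameBlock D α β' := by
      intro β β' hββ' hβ γ hγD
      by_cases hγC : γ ∈ C
      · exact (hβ γ hγD).trans (hββ' γ hγC)
      · have hγδ : γ < δ := hδ γ ⟨hγD, hγC⟩
        have hεβ : ε ≤ β := (hβ ε hεD).mp hεα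
        have hδ'β' : δ' ≤ β' := (hββ' δ' hδ'C).mp (le_trans hδ'ε.le hεβ)
        have hγα : γ ≤ α := le_trans hγδ.le (le_trans hδδ'.le (le_trans hδ'ε.le hεα))
        have hγβ' : γ ≤ β' := le_trans hγδ.le (le_trans hδδ'.le hδ'β')
        exact iff_of_true hγα hγβ'
    intro β β' hββ'
    have hββ'' : SameBlock C β' β := fun γ hγ => (hββ' γ hγ).symm
    exact ⟨fun hb => helper β β' hββ' hb, fun hb => helper β' β hββ'' hb⟩
  have hsub : {α : W | ¬ BlockUnion C {β | SameBlock D α β}} ⊆ Set.Iio ε := by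
    intro α hα
    by_contra hlt
    exact hα (key α (not_lt.mp hlt))
  refine (Set.Countable.mono hsub ?_)
  rw [Cardinal.countable_iff_lt_aleph_one]
  exact Cardinal.mk_Iio_ord_toType (c := Cardinal.aleph 1) ε
end

section
/- 𝔟_{ω₁} equals the strong reaping number r̂_{ω₁}: the least cardinality of a family R of uncountable subsets of ω₁ such that no nice club C strongly splits R. -/
open Cardinal Set

universe u
variable {B : Type u} [BooleanAlgebra B]

section Aux
open Set

noncomputable instance : WellFoundedLT W :=
  inferInstanceAs (WellFoundedLT (Cardinal.aleph 1).ord.ToType)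

noncomputable instance : Nonempty W := by
  refine Ordinal.toType_nonempty_iff_ne_zero.2 ?_
  intro h
  have h2 : (Cardinal.aleph 1) = 0 := by
    have := congrArg Ordinal.card h
    simpa [Cardinal.card_ord] using this
  exact absurd (h2 ▸ Cardinal.aleph0_lt_aleph_one) (by simp)

lemma mk_W : #W = Cardinal.aleph 1 :=
  (Cardinal.mk_toType _).trans (Cardinal.card_ord _)

lemma countable_IioW (α : W) : (Set.Iio α).Countable := by
  rw [Cardinal.countable_iff_lt_aleph_one]
  exact Cardinal.mk_Iio_ord_toType α

lemma countable_IicW (α : W) : (Set.Iic α).Countable := by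
  rw [← Set.Iio_union_right]
  exact (countable_IioW α).union (Set.countable_singleton α)

lemma uncountable_univW : ¬ (Set.univ : Set W).Countable := by
  rw [Cardinal.countable_iff_lt_aleph_one, Cardinal.mk_univ, mk_W]
  exact lt_irrefl _

lemma exists_gt_of_countable {s : Set W} (hs : s.Countable) : ∃ β : W, ∀ x ∈ s, x < β := by
  by_contra h
  push_neg at h
  apply uncountable_univW
  refine (hs.biUnion fun x _ => countable_IicW x).mono ?_
  intro β _
  obtain ⟨x, hx, hbx⟩ := h β
  exact Set.mem_biUnion hx hbx

lemma not_countable_of_unbounded {s : Set W} (h : ∀ β, ∃ x ∈ s, β < x) :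
    ¬ s.Countable := by
  intro hc
  obtain ⟨β, hβ⟩ := exists_gt_of_countable hc
  obtain ⟨x, hx, hbx⟩ := h β
  exact absurd (hβ x hx) (not_lt.2 hbx.le)

lemma unbounded_of_not_countable {s : Set W} (h : ¬ s.Countable) :
    ∀ β, ∃ x ∈ s, β < x := by
  intro β
  by_contra hb
  push_neg at hb
  exact h ((countable_IicW β).mono hb)

/-- minimum of a set (junk value if empty) -/
noncomputable def wmin (s : Set W) : W :=
  @dite _ s.Nonempty (Classical.dec _)
    (fun h => (IsWellFounded.wf (α := W) (r := (· < ·))).min s h)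
    (fun _ => Classical.arbitrary W)

lemma wmin_mem {s : Set W} (h : s.Nonempty) : wmin s ∈ s := by
  rw [wmin, dif_pos h]
  exact WellFounded.min_mem _ s h

lemma wmin_le {s : Set W} {x : W} (h : x ∈ s) : wmin s ≤ x := by
  rw [wmin, dif_pos ⟨x, h⟩]
  exact not_lt.1 (WellFounded.not_lt_min _ s h)

/-- next element of `s` strictly above `α` -/
noncomputable def nxt (s : Set W) (α : W) : W := wmin (s ∩ Set.Ioi α)

lemma nxt_nonempty {s : Set W} (hs : ∀ β, ∃ x ∈ s, β < x) (α : W) :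
    (s ∩ Set.Ioi α).Nonempty := by
  obtain ⟨x, hx, hax⟩ := hs α; exact ⟨x, hx, hax⟩

lemma nxt_mem {s : Set W} (hs : ∀ β, ∃ x ∈ s, β < x) (α : W) : nxt s α ∈ s :=
  (wmin_mem (nxt_nonempty hs α)).1

lemma lt_nxt {s : Set W} (hs : ∀ β, ∃ x ∈ s, β < x) (α : W) : α < nxt s α :=
  (wmin_mem (nxt_nonempty hs α)).2

lemma nxt_le {s : Set W} {x α : W} (hx : x ∈ s) (hax : α < x) : nxt s α ≤ x :=
  wmin_le ⟨hx, hax⟩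

/-- a fast-growing monotone function dominating `g` -/
noncomputable def hatF (g : W → W) (α : W) : W :=
  wmin {β : W | α < β ∧ ∀ γ, γ ≤ α → g γ < β}

lemma hatF_nonempty (g : W → W) (α : W) :
    {β : W | α < β ∧ ∀ γ, γ ≤ α → g γ < β}.Nonempty := by
  obtain ⟨β, hβ⟩ := exists_gt_of_countable ((countable_IicW α).union ((countable_IicW α).image g))
  exact ⟨β, hβ α (Or.inl (Set.mem_Iic.2 le_rfl)),
    fun γ hγ => hβ (g γ) (Or.inr ⟨γ, hγ, rfl⟩)⟩

lemma lt_hatF (g : W → W) (α : W) : α < hatF g α :=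
  (wmin_mem (hatF_nonempty g α)).1

lemma hatF_gt (g : W → W) {γ α : W} (h : γ ≤ α) : g γ < hatF g α :=
  (wmin_mem (hatF_nonempty g α)).2 γ h

lemma hatF_mono (g : W → W) {α α' : W} (h : α ≤ α') : hatF g α ≤ hatF g α' :=
  wmin_le ⟨lt_of_le_of_lt h (lt_hatF g α'), fun γ hγ => hatF_gt g (hγ.trans h)⟩

/-- the club of closure points of `hatF g` -/
def clo (g : W → W) : Set W := {α | ∀ β, β < α → hatF g β < α}

lemma clo_gt {g : W → W} {α β : W} (hα : α ∈ clo g) (hβ : β < α) : g β < α :=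
  lt_trans (hatF_gt g le_rfl) (hα β hβ)

lemma iter_strictMono (g : W → W) (α : W) :
    StrictMono (fun n : ℕ => (hatF g)^[n] α) := by
  apply strictMono_nat_of_lt_succ
  intro k
  rw [Function.iterate_succ_apply']
  exact lt_hatF g _

lemma le_iter (g : W → W) (α : W) (n : ℕ) : α ≤ (hatF g)^[n] α := by
  cases n with
  | zero => simp
  | succ n => exact (iter_strictMono g α (Nat.zero_lt_succ n)).le

lemma clo_unbounded (g : W → W) (α : W) : ∃ β ∈ clo g, α < β := by
  set t : Set W := Set.range (fun n : ℕ => (hatF g)^[n] (hatF g α)) with ht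
  obtain ⟨β₀, hβ₀⟩ := exists_gt_of_countable (Set.countable_range
    (fun n : ℕ => (hatF g)^[n] (hatF g α)))
  set U : Set W := {β | ∀ x ∈ t, x < β} with hU
  have hUne : U.Nonempty := ⟨β₀, hβ₀⟩
  set σ := wmin U with hσ
  have hσU : σ ∈ U := wmin_mem hUne
  have hit : ∀ n : ℕ, (hatF g)^[n] (hatF g α) < σ := fun n => hσU _ ⟨n, rfl⟩
  refine ⟨σ, ?_, lt_trans (lt_hatF g α) (hit 0)⟩
  intro β hβ
  have hβU : β ∉ U := fun h => absurd (wmin_le h) (not_le.2 hβ)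
  rw [hU, Set.mem_setOf_eq] at hβU
  push_neg at hβU
  obtain ⟨x, ⟨n, rfl⟩, hxβ⟩ := hβU
  calc hatF g β ≤ hatF g ((hatF g)^[n] (hatF g α)) := hatF_mono g hxβ
    _ = (hatF g)^[n+1] (hatF g α) := (Function.iterate_succ_apply' _ _ _).symm
    _ < σ := hit (n+1)

lemma clo_closed (g : W → W) {α : W} (hne : (clo g ∩ Set.Iio α).Nonempty)
    (hlub : IsLUB (clo g ∩ Set.Iio α) α) : α ∈ clo g := by
  intro β hβ
  have hnub : ¬ β ∈ upperBounds (clo g ∩ Set.Iio α) := by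
    intro hub
    exact absurd (hlub.2 hub) (not_le.2 hβ)
  rw [upperBounds, Set.mem_setOf_eq] at hnub
  push_neg at hnub
  obtain ⟨c, ⟨hc, hcα⟩, hβc⟩ := hnub
  exact lt_trans (hc β hβc) hcα

lemma clo_isClub (g : W → W) : IsClubW (clo g) :=
  ⟨fun α => clo_unbounded g α, fun _ hne hlub => clo_closed g hne hlub⟩

lemma clo_not_countable (g : W → W) : ¬ (clo g).Countable :=
  not_countable_of_unbounded (fun β => clo_unbounded g β)

lemma sameBlock_refl (C : Set W) (α : W) : SameBlock C α α := fun _ _ => Iff.rfl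

lemma sameBlock_symm {C : Set W} {α β : W} (h : SameBlock C α β) : SameBlock C β α :=
  fun γ hγ => (h γ hγ).symm

lemma sameBlock_trans {C : Set W} {α β δ : W} (h : SameBlock C α β)
    (h' : SameBlock C β δ) : SameBlock C α δ :=
  fun γ hγ => (h γ hγ).trans (h' γ hγ)

lemma sameBlock_iter (g : W → W) (α : W) (n : ℕ) :
    SameBlock (clo g) α ((hatF g)^[n] α) := by
  intro γ hγ
  constructor
  · intro h
    exact h.trans (le_iter g α n)
  · intro h
    by_contra hc
    push_neg at hc
    have key : ∀ m : ℕ, (hatF g)^[m] α < γ := by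
      intro m
      induction m with
      | zero => simpa using hc
      | succ m ih =>
        rw [Function.iterate_succ_apply']
        exact hγ _ ih
    exact absurd h (not_le.2 (key n))

lemma clo_nice (g : W → W) : NiceClub (clo g) := by
  refine ⟨clo_isClub g, fun α => ?_⟩
  apply Set.infinite_of_injective_forall_mem
    (f := fun n : ℕ => (hatF g)^[n] α) (iter_strictMono g α).injective
  intro n
  exact sameBlock_iter g α n

lemma block_lt_nxt {C : Set W} (hC : ∀ β, ∃ x ∈ C, β < x) {α β : W}
    (h : SameBlock C α β) : β < nxt C α := by
  by_contra hb
  push_neg at hb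
  exact absurd ((h _ (nxt_mem hC α)).2 hb) (not_le.2 (lt_nxt hC α))

lemma image_not_countable {s : Set W} {F : W → W} (hs : ¬ s.Countable)
    (hfib : ∀ v, {x | x ∈ s ∧ F x = v}.Countable) : ¬ (F '' s).Countable := by
  intro hI
  apply hs
  refine ((hI.biUnion (fun v _ => hfib v)).mono ?_)
  intro x hx
  exact Set.mem_biUnion (Set.mem_image_of_mem F hx) ⟨hx, rfl⟩

/-- greatest element of `C` below `ρ` -/
noncomputable def mxc (C : Set W) (ρ : W) : W := wmin (upperBounds (C ∩ Set.Iic ρ))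

lemma mxc_spec {C : Set W} (hC : IsClubW C) {ρ : W} (hex : ∃ c ∈ C, c ≤ ρ) :
    mxc C ρ ∈ C ∧ mxc C ρ ≤ ρ ∧ ∀ c ∈ C, c ≤ ρ → c ≤ mxc C ρ := by
  have hρU : ρ ∈ upperBounds (C ∩ Set.Iic ρ) := fun x hx => hx.2
  have hσU : mxc C ρ ∈ upperBounds (C ∩ Set.Iic ρ) := wmin_mem ⟨ρ, hρU⟩
  have hσρ : mxc C ρ ≤ ρ := wmin_le hρU
  obtain ⟨c0, hc0C, hc0ρ⟩ := hex
  have hσC : mxc C ρ ∈ C := by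
    by_cases h : mxc C ρ ∈ C
    · exact h
    · exfalso
      have hne : (C ∩ Set.Iio (mxc C ρ)).Nonempty := by
        refine ⟨c0, hc0C, ?_⟩
        rcases lt_or_eq_of_le (hσU ⟨hc0C, hc0ρ⟩) with h' | h'
        · exact h'
        · exact absurd (h' ▸ hc0C) h
      have hlub : IsLUB (C ∩ Set.Iio (mxc C ρ)) (mxc C ρ) := by
        constructor
        · intro x hx; exact hx.2.le
        · intro b hb
          apply wmin_le
          intro x hx
          rcases lt_or_eq_of_le (hσU hx) with h' | h'
          · exact hb ⟨hx.1, h'⟩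
          · exact absurd (h' ▸ hx.1) h
      exact h (hC.2 _ hne hlub)
  exact ⟨hσC, hσρ, fun c hc hcρ => hσU ⟨hc, hcρ⟩⟩

lemma sameBlock_mxc {C : Set W} (hC : IsClubW C) {ρ : W} (hex : ∃ c ∈ C, c ≤ ρ) :
    SameBlock C (mxc C ρ) ρ := by
  obtain ⟨h1, h2, h3⟩ := mxc_spec hC hex
  intro γ hγ
  exact ⟨fun h => h.trans h2, fun h => h3 γ hγ h⟩

lemma blockish_compl {C b : Set W} (h : Blockish C b) : Blockish C bᶜ := by
  obtain ⟨h1, h2, h3⟩ := h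
  refine ⟨fun α β hs => not_congr (h1 α β hs), h3, by rwa [compl_compl]⟩

end Aux

lemma keyR {F : Set (W → W)} (hF : ∀ g, ∃ f ∈ F, ¬ EvDom f g) :
    (∀ X ∈ (fun f => clo f) '' F, ¬ X.Countable) ∧
      (∀ C, NiceClub C → ¬ StrSplits C ((fun f => clo f) '' F)) := by
  constructor
  · rintro X ⟨f, hf, rfl⟩
    exact clo_not_countable f
  · intro C hC hstr
    have hCub : ∀ β, ∃ x ∈ C, β < x := hC.1.1
    obtain ⟨f, hfF, hfg⟩ := hF (fun α => nxt C (nxt C α))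
    apply hfg
    set A : Set W := {α | ∀ β, SameBlock C α β → β ∉ clo f} with hA
    have hXA : ∀ x, x ∈ clo f → x ∉ A := fun x hx hmem => hmem x (sameBlock_refl C x) hx
    have hAcount : A.Countable := by
      by_contra hAc
      have hbl : Blockish C A := by
        refine ⟨?_, hAc, ?_⟩
        · intro α β hs
          constructor
          · intro hα β' hs'
            exact hα β' (sameBlock_trans hs hs')
          · intro hβ β' hs'
            exact hβ β' (sameBlock_trans (sameBlock_symm hs) hs')
        · intro hcc
          exact clo_not_countable f (hcc.mono (fun x hx => hXA x hx))
      have hsp := hstr A hbl (clo f) ⟨f, hfF, rfl⟩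
      apply hsp.1
      have hem : clo f ∩ A = ∅ := by
        ext x
        simp only [Set.mem_inter_iff, Set.mem_empty_iff_false, iff_false]
        rintro ⟨h1, h2⟩
        exact hXA x h1 h2
      rw [hem]
      exact Set.countable_empty
    obtain ⟨δ, hδ⟩ := exists_gt_of_countable hAcount
    refine Set.Countable.mono ?_ (countable_IioW δ)
    intro α hα
    by_contra hge
    rw [Set.mem_Iio, not_lt] at hge
    apply hα
    show f α ≤ nxt C (nxt C α)
    have hc1C : nxt C α ∈ C := nxt_mem hCub α
    have hαc1 : α < nxt C α := lt_nxt hCub α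
    have hc1A : nxt C α ∉ A := fun hmem =>
      absurd (hδ _ hmem) (not_lt.2 (hge.trans hαc1.le))
    rw [hA, Set.mem_setOf_eq] at hc1A
    push_neg at hc1A
    obtain ⟨e, he1, he2⟩ := hc1A
    have hc1e : nxt C α ≤ e := (he1 _ hc1C).1 le_rfl
    have helt : e < nxt C (nxt C α) := block_lt_nxt hCub he1
    have hfαe : f α < e := clo_gt he2 (lt_of_lt_of_le hαc1 hc1e)
    exact le_of_lt (lt_of_lt_of_le hfαe helt.le)

lemma keyF_core {g : W → W} {X b' : Set W} (hbl : Blockish (clo g) b')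
    (hXu : ¬ X.Countable) (hXb : (X ∩ b').Countable) :
    ¬ EvDom (fun α => nxt X α) g := by
  have hCclub : IsClubW (clo g) := clo_isClub g
  have hCub : ∀ β, ∃ x ∈ clo g, β < x := hCclub.1
  have hXub : ∀ β, ∃ x ∈ X, β < x := unbounded_of_not_countable hXu
  obtain ⟨δ, hδ⟩ := exists_gt_of_countable hXb
  have hδ₂C : nxt (clo g) δ ∈ clo g := nxt_mem hCub δ
  have hδδ₂ : δ < nxt (clo g) δ := lt_nxt hCub δ
  set δ₂ := nxt (clo g) δ with hδ₂def
  set s := b' \ Set.Iic δ₂ with hsdef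
  have hsu : ¬ s.Countable := by
    intro hc
    refine hbl.2.1 ((hc.union (countable_IicW δ₂)).mono (fun x hx => ?_))
    by_cases h : x ≤ δ₂
    · exact Or.inr h
    · exact Or.inl ⟨hx, h⟩
  have hkey : ∀ ρ ∈ s, ¬ (nxt X (mxc (clo g) ρ) ≤ g (mxc (clo g) ρ)) := by
    intro ρ hρ
    have hρb : ρ ∈ b' := hρ.1
    have hδ₂ρ : δ₂ < ρ := not_le.1 hρ.2
    have hex : ∃ c ∈ clo g, c ≤ ρ := ⟨δ₂, hδ₂C, hδ₂ρ.le⟩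
    obtain ⟨hvC, hvρ, hvmax⟩ := mxc_spec hCclub hex
    set v := mxc (clo g) ρ with hvdef
    have hδ₂v : δ₂ ≤ v := hvmax δ₂ hδ₂C hδ₂ρ.le
    have hvb : v ∈ b' := (hbl.1 v ρ (sameBlock_mxc hCclub hex)).2 hρb
    have hc2C : nxt (clo g) v ∈ clo g := nxt_mem hCub v
    have hvc2 : v < nxt (clo g) v := lt_nxt hCub v
    have hgv : g v < nxt (clo g) v := clo_gt hc2C hvc2
    have hnge : nxt (clo g) v ≤ nxt X v := by
      by_contra hlt
      push_neg at hlt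
      have hxX : nxt X v ∈ X := nxt_mem hXub v
      have hvx : v < nxt X v := lt_nxt hXub v
      have hsb : SameBlock (clo g) v (nxt X v) := by
        intro γ hγ
        constructor
        · intro h
          exact h.trans hvx.le
        · intro h
          by_contra hvγ
          push_neg at hvγ
          exact absurd ((nxt_le hγ hvγ).trans h) (not_le.2 hlt)
      have hxb : nxt X v ∈ b' := (hbl.1 v _ hsb).1 hvb
      have hxδ : nxt X v < δ := hδ _ ⟨hxX, hxb⟩
      exact absurd hxδ (not_lt.2 (le_of_lt (lt_of_le_of_lt (hδδ₂.le.trans hδ₂v) hvx)))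
    exact not_le.2 (hgv.trans_le hnge)
  intro hEv
  have himg : ¬ ((fun ρ => mxc (clo g) ρ) '' s).Countable := by
    apply image_not_countable hsu
    intro v
    refine Set.Countable.mono ?_ (countable_IioW (nxt (clo g) v))
    rintro x ⟨hxs, hxv⟩
    have hex : ∃ c ∈ clo g, c ≤ x := ⟨δ₂, hδ₂C, (not_le.1 hxs.2).le⟩
    have hsb := sameBlock_mxc hCclub hex
    rw [hxv] at hsb
    exact block_lt_nxt hCub hsb
  apply himg
  refine hEv.mono ?_
  rintro y ⟨ρ, hρ, rfl⟩
  exact hkey ρ hρ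

lemma keyF {R : Set (Set W)} (h1 : ∀ X ∈ R, ¬ X.Countable)
    (h2 : ∀ C : Set W, NiceClub C → ¬ StrSplits C R) :
    ∀ g, ∃ f ∈ (fun X => fun α => nxt X α) '' R, ¬ EvDom f g := by
  intro g
  have hns := h2 (clo g) (clo_nice g)
  rw [StrSplits] at hns
  push_neg at hns
  obtain ⟨b, hb, X, hXR, hsp⟩ := hns
  refine ⟨fun α => nxt X α, ⟨X, hXR, rfl⟩, ?_⟩
  rw [Splits, not_and_or, not_not, not_not] at hsp
  rcases hsp with h | h
  · exact keyF_core hb (h1 X hXR) h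
  · refine keyF_core (blockish_compl hb) (h1 X hXR) ?_
    rwa [Set.diff_eq] at h

theorem bW_eq_rHatW : bW = rHatW := by
  have hFuniv : ∀ g, ∃ f ∈ (Set.univ : Set (W → W)), ¬ EvDom f g := by
    intro g
    refine ⟨hatF g, Set.mem_univ _, fun hEv => ?_⟩
    have hsub : (Set.univ : Set W) ⊆ {α | ¬ hatF g α ≤ g α} :=
      fun α _ => not_le.2 (hatF_gt g le_rfl)
    exact uncountable_univW (hEv.mono hsub)
  have hbSetNe : {c | ∃ F : Set (W → W), (∀ g, ∃ f ∈ F, ¬ EvDom f g) ∧ #F = c}.Nonempty :=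
    ⟨_, Set.univ, hFuniv, rfl⟩
  have hkr := keyR hFuniv
  have hrSetNe : {c | ∃ R : Set (Set W), (∀ X ∈ R, ¬ X.Countable) ∧
      (∀ C : Set W, NiceClub C → ¬ StrSplits C R) ∧ #R = c}.Nonempty :=
    ⟨_, _, hkr.1, hkr.2, rfl⟩
  apply le_antisymm
  · rw [bW, rHatW]
    apply le_csInf hrSetNe
    rintro c ⟨R, h1, h2, rfl⟩
    exact le_trans (csInf_le' ⟨_, keyF h1 h2, rfl⟩) Cardinal.mk_image_le
  · rw [bW, rHatW]
    apply le_csInf hbSetNe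
    rintro c ⟨F, hF, rfl⟩
    have hk := keyR hF
    exact le_trans (csInf_le' ⟨_, hk.1, hk.2, rfl⟩) Cardinal.mk_image_le
end

section
/- Let A ⊆ B ⊆ P(ω₁) with B dichotomous, and let b ⊆ ω₁. Then the subalgebra generated by B ∪ {b} is dichotomous if and only if for all u ∈ B, u ∩ b is not countably infinite and u ∩ b' is not countably infinite. -/
open Cardinal Set

universe u
variable {B : Type u} [BooleanAlgebra B]

lemma gen_form (Bs : Set (Set W)) (hsub : IsSubalg Bs) (b : Set W) :
    ∀ x, InGen (Bs ∪ {b}) x → ∃ u ∈ Bs, ∃ v ∈ Bs, x = (u ∩ b) ∪ (v ∩ bᶜ) := by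
  have hempty : (∅ : Set W) ∈ Bs := hsub.1
  have huniv : (Set.univ : Set W) ∈ Bs := by
    simpa using hsub.2.1 ∅ hempty
  intro x hx
  induction hx with
  | @base a ha =>
    rcases ha with ha | ha
    · exact ⟨a, ha, a, ha, by
        rw [← Set.inter_union_distrib_left, Set.union_compl_self, Set.inter_univ]⟩
    · rcases ha with rfl
      exact ⟨Set.univ, huniv, ∅, hempty, by simp⟩
  | bot => exact ⟨∅, hempty, ∅, hempty, by simp⟩
  | @compl a ha ih =>
    obtain ⟨u, hu, v, hv, rfl⟩ := ih
    refine ⟨uᶜ, hsub.2.1 u hu, vᶜ, hsub.2.1 v hv, ?_⟩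
    ext t
    by_cases ht : t ∈ b <;> simp [ht]
  | @sup a c ha hc iha ihc =>
    obtain ⟨u, hu, v, hv, rfl⟩ := iha
    obtain ⟨u', hu', v', hv', rfl⟩ := ihc
    refine ⟨u ∪ u', hsub.2.2 u hu u' hu', v ∪ v', hsub.2.2 v hv v' hv', ?_⟩
    ext t
    by_cases ht : t ∈ b <;> simp [ht, Set.sup_eq_union] <;> tauto

theorem dichot_gen_iff (Bs : Set (Set W)) (hsub : IsSubalg Bs)
    (hA : finCofin ⊆ Bs) (hdich : Dichot Bs) (b : Set W) :
    Dichot {x : Set W | InGen (Bs ∪ {b}) x} ↔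
      ∀ u ∈ Bs, ¬ ((u ∩ b).Countable ∧ (u ∩ b).Infinite) ∧
        ¬ ((u ∩ bᶜ).Countable ∧ (u ∩ bᶜ).Infinite) := by
  constructor
  · intro hd u hu
    have hb : InGen (Bs ∪ {b}) b := .base (Or.inr rfl)
    have hu' : InGen (Bs ∪ {b}) u := .base (Or.inl hu)
    have h1 : InGen (Bs ∪ {b}) (u ∩ b) := by
      have := InGen.compl (InGen.sup (InGen.compl hu') (InGen.compl hb))
      simpa [compl_sup, compl_compl, Set.inf_eq_inter] using this
    have h2 : InGen (Bs ∪ {b}) (u ∩ bᶜ) := by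
      have := InGen.compl (InGen.sup (InGen.compl hu') hb)
      simpa [compl_sup, compl_compl, Set.inf_eq_inter] using this
    exact ⟨hd _ h1, hd _ h2⟩
  · intro h x hx
    rintro ⟨hc, hi⟩
    obtain ⟨u, hu, v, hv, rfl⟩ := gen_form Bs hsub b x hx
    have hub : (u ∩ b).Countable := hc.mono Set.subset_union_left
    have hvb : (v ∩ bᶜ).Countable := hc.mono Set.subset_union_right
    have hor : (u ∩ b).Infinite ∨ (v ∩ bᶜ).Infinite := by
      by_contra hcon
      push_neg at hcon
      exact hi (hcon.1.union hcon.2)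
    rcases hor with h' | h'
    · exact (h u hu).1 ⟨hub, h'⟩
    · exact (h v hv).2 ⟨hvb, h'⟩
end
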